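/- arXiv:2111.08843 — 2 statements merged into one kernel-verified Lean document; each statement's English description precedes it below -/
import Mathlib

section
/- Let I ⊆ [0, N−1] be nonempty and let w_min = min_{i∈I} w(g_i). The cosets C_i(I), i ∈ I, partition the code C(I) ∖ {0} into disjoint sets, and the number of minimum-weight codewords satisfies A_{w_min}(I) = Σ_{i ∈ I, w(g_i) = w_min} A_{i, w_min}(I); in particular, A_{i, w_min}(I) = 0 whenever w(g_i) > w_min. -/
noncomputable section
open scoped Classical
open Finset

/-- The 2×2 binary matrix [[1,0],[1,1]], as an ℕ-indexed function (zero outside range). -/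
def G2 (a b : ℕ) : ZMod 2 :=
  if a = 0 ∧ b = 0 then 1
  else if a = 1 ∧ b = 0 then 1
  else if a = 1 ∧ b = 1 then 1
  else 0

/-- `G n i c` is the (i,c) entry of the n-th Kronecker power over F₂ of [[1,0],[1,1]],
for row/column indices i, c ∈ [0, 2^n − 1] (standard row-major index flattening). -/
def G : ℕ → ℕ → ℕ → ZMod 2
  | 0 => fun i c => if i = 0 ∧ c = 0 then 1 else 0
  | n + 1 => fun i c => G2 (i / 2 ^ n) (c / 2 ^ n) * G n (i % 2 ^ n) (c % 2 ^ n)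

/-- Row i of the polar transform G_N (N = 2^n), as a vector of its coordinates. -/
def g (n i : ℕ) : ℕ → ZMod 2 := fun c => G n i c

/-- S_i ⊆ [0, n−1]: the support of the binary representation of i. -/
def S (n i : ℕ) : Finset ℕ := (Finset.range n).filter fun a => i.testBit a

/-- T_i = [0, n−1] \ S_i. -/
def T (n i : ℕ) : Finset ℕ := Finset.range n \ S n i

/-- Hamming weight of a vector whose coordinates are indexed by [0, 2^n − 1]. -/
def wt (n : ℕ) (v : ℕ → ZMod 2) : ℕ :=
  ((Finset.range (2 ^ n)).filter fun c => v c ≠ 0).card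

/-- The index in [0, 2^n − 1] whose binary support is the set U ⊆ [0, n−1]. -/
def idx (U : Finset ℕ) : ℕ := ∑ a ∈ U, 2 ^ a

/-- K_i = {j ∈ [i+1, N−1] : w(g_j) ≥ w(g_i ⊕ g_j) and w(g_i ⊕ g_j) = w(g_i)}. -/
def K (n i : ℕ) : Finset ℕ :=
  (Finset.Ico (i + 1) (2 ^ n)).filter fun j =>
    wt n (g n i + g n j) ≤ wt n (g n j) ∧ wt n (g n i + g n j) = wt n (g n i)

/-- One generating step of the partial order on [0, 2^n − 1]. -/
def poStep (n i j : ℕ) : Prop :=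
  i < 2 ^ n ∧ j < 2 ^ n ∧
    (S n i ⊆ S n j ∨
      ∃ a b, a ∈ S n i ∧ b ∉ S n i ∧ a < b ∧ S n j = insert b (S n i \ {a}))

/-- The partial order ⪯: reflexive–transitive closure of the generating relation. -/
def po (n : ℕ) : ℕ → ℕ → Prop := Relation.ReflTransGen (poStep n)

/-- Partial Order Property of an information set I ⊆ [0, 2^n − 1]. -/
def POP (n : ℕ) (I : Finset ℕ) : Prop :=
  ∀ i ∈ I, ∀ j, j < 2 ^ n → po n i j → j ∈ I

/-- The code C(I): all F₂-linear combinations (i.e. subset sums) of the rows g_i, i ∈ I. -/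
def codewords (n : ℕ) (I : Finset ℕ) : Finset (ℕ → ZMod 2) :=
  I.powerset.image fun H => ∑ h ∈ H, g n h

/-- A_w(I): the number of codewords of C(I) of Hamming weight w. -/
def A (n : ℕ) (I : Finset ℕ) (w : ℕ) : ℕ :=
  ((codewords n I).filter fun v => wt n v = w).card

/-- The coset C_i(I) = {g_i ⊕ ⊕_{h∈H} g_h : H ⊆ I \ [0,i]}. -/
def coset (n : ℕ) (I : Finset ℕ) (i : ℕ) : Finset (ℕ → ZMod 2) :=
  ((I.filter fun h => i < h).powerset).image fun H => g n i + ∑ h ∈ H, g n h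

/-- A_{i,w}(I): the number of vectors of Hamming weight w in the coset C_i(I). -/
def Ai (n : ℕ) (I : Finset ℕ) (i w : ℕ) : ℕ :=
  ((coset n I i).filter fun v => wt n v = w).card


section Aux

lemma two_pow_succ (n : ℕ) : 2 ^ (n + 1) = 2 ^ n + 2 ^ n := by rw [pow_succ]; ring

lemma div_high {n c : ℕ} (hc : c < 2 ^ n) : (2 ^ n + c) / 2 ^ n = 1 := by
  rw [Nat.add_div_left c (Nat.two_pow_pos n), Nat.div_eq_of_lt hc]

lemma g_low {n i c : ℕ} (hi : i < 2 ^ n) (hc : c < 2 ^ n) : g (n + 1) i c = g n i c := by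
  simp only [g, G, Nat.div_eq_of_lt hi, Nat.div_eq_of_lt hc, Nat.mod_eq_of_lt hi,
    Nat.mod_eq_of_lt hc]
  have : G2 0 0 = 1 := by decide
  rw [this, one_mul]

lemma g_low_high {n i c : ℕ} (hi : i < 2 ^ n) (hc : c < 2 ^ n) :
    g (n + 1) i (2 ^ n + c) = 0 := by
  simp only [g, G, Nat.div_eq_of_lt hi, div_high hc]
  have : G2 0 1 = 0 := by decide
  rw [this, zero_mul]

lemma g_high_low {n i c : ℕ} (hi : i < 2 ^ n) (hc : c < 2 ^ n) :
    g (n + 1) (2 ^ n + i) c = g n i c := by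
  simp only [g, G, div_high hi, Nat.div_eq_of_lt hc, Nat.add_mod_left,
    Nat.mod_eq_of_lt hi, Nat.mod_eq_of_lt hc]
  have : G2 1 0 = 1 := by decide
  rw [this, one_mul]

lemma g_high_high {n i c : ℕ} (hi : i < 2 ^ n) (hc : c < 2 ^ n) :
    g (n + 1) (2 ^ n + i) (2 ^ n + c) = g n i c := by
  simp only [g, G, div_high hi, div_high hc, Nat.add_mod_left,
    Nat.mod_eq_of_lt hi, Nat.mod_eq_of_lt hc]
  have : G2 1 1 = 1 := by decide
  rw [this, one_mul]

lemma g_diag {n : ℕ} : ∀ {i : ℕ}, i < 2 ^ n → g n i i = 1 := by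
  induction n with
  | zero => intro i hi; interval_cases i; rfl
  | succ n ih =>
    intro i hi
    rcases lt_or_ge i (2 ^ n) with h | h
    · rw [g_low h h]; exact ih h
    · obtain ⟨i', rfl⟩ : ∃ i', i = 2 ^ n + i' := ⟨i - 2 ^ n, by omega⟩
      have hi' : i' < 2 ^ n := by rw [two_pow_succ] at hi; omega
      rw [g_high_high hi' hi']; exact ih hi'

lemma g_upper {n : ℕ} : ∀ {h c : ℕ}, h < c → c < 2 ^ n → g n h c = 0 := by
  induction n with
  | zero => intro h c h1 h2; omega
  | succ n ih =>
    intro h c hhc hc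
    rcases lt_or_ge c (2 ^ n) with h1 | h1
    · rw [g_low (hhc.trans h1) h1]; exact ih hhc h1
    · obtain ⟨c', rfl⟩ : ∃ c', c = 2 ^ n + c' := ⟨c - 2 ^ n, by omega⟩
      have hc' : c' < 2 ^ n := by rw [two_pow_succ] at hc; omega
      rcases lt_or_ge h (2 ^ n) with h2 | h2
      · exact g_low_high h2 hc'
      · obtain ⟨h', rfl⟩ : ∃ h', h = 2 ^ n + h' := ⟨h - 2 ^ n, by omega⟩
        have hh' : h' < 2 ^ n := by omega
        rw [g_high_high hh' hc']; exact ih (by omega) hc'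

end Aux
section Aux2

lemma wt_congr {n : ℕ} {v w : ℕ → ZMod 2} (h : ∀ c < 2 ^ n, v c = w c) : wt n v = wt n w := by
  unfold wt
  congr 1
  apply Finset.filter_congr
  intro c hc
  rw [h c (Finset.mem_range.mp hc)]

lemma wt_zero (n : ℕ) : wt n (0 : ℕ → ZMod 2) = 0 := by
  simp [wt]

lemma wt_split (n : ℕ) (v : ℕ → ZMod 2) :
    wt (n + 1) v = wt n v + wt n (fun c => v (2 ^ n + c)) := by
  unfold wt
  have hr : Finset.range (2 ^ (n + 1)) =
      Finset.range (2 ^ n) ∪ Finset.Ico (2 ^ n) (2 ^ (n + 1)) := by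
    simp only [Finset.range_eq_Ico]
    exact (Finset.Ico_union_Ico_eq_Ico (Nat.zero_le _) (Nat.pow_le_pow_right (by norm_num) (Nat.le_succ n))).symm
  rw [hr, Finset.filter_union, Finset.card_union_of_disjoint]
  · congr 1
    apply Finset.card_bij (fun c _ => c - 2 ^ n)
    · intro c hc
      simp only [Finset.mem_filter, Finset.mem_Ico] at hc
      simp only [Finset.mem_filter, Finset.mem_range]
      have : 2 ^ n + (c - 2 ^ n) = c := by omega
      rw [this]
      exact ⟨by rw [two_pow_succ] at hc; omega, hc.2⟩
    · intro a ha b hb hab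
      simp only [Finset.mem_filter, Finset.mem_Ico] at ha hb
      omega
    · intro b hb
      simp only [Finset.mem_filter, Finset.mem_range] at hb
      refine ⟨2 ^ n + b, ?_, by omega⟩
      simp only [Finset.mem_filter, Finset.mem_Ico]
      exact ⟨⟨by omega, by rw [two_pow_succ]; omega⟩, hb.2⟩
  · apply Finset.disjoint_filter_filter
    rw [Finset.range_eq_Ico]
    exact Finset.Ico_disjoint_Ico_consecutive 0 (2 ^ n) (2 ^ (n + 1))

lemma wt_triangle (n : ℕ) (x y : ℕ → ZMod 2) : wt n x ≤ wt n (x + y) + wt n y := by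
  unfold wt
  calc ((Finset.range (2 ^ n)).filter fun c => x c ≠ 0).card
      ≤ (((Finset.range (2 ^ n)).filter fun c => (x + y) c ≠ 0) ∪
         ((Finset.range (2 ^ n)).filter fun c => y c ≠ 0)).card := by
        apply Finset.card_le_card
        intro c hc
        simp only [Finset.mem_filter, Finset.mem_union, Finset.mem_range, Pi.add_apply] at hc ⊢
        by_cases hy : y c = 0
        · left; refine ⟨hc.1, ?_⟩; rw [hy, add_zero]; exact hc.2
        · right; exact ⟨hc.1, hy⟩
    _ ≤ _ := Finset.card_union_le _ _

end Aux2
section Aux3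

lemma sum_g_ne_zero {n : ℕ} {D : Finset ℕ} (hD : ∀ h ∈ D, h < 2 ^ n) (hne : D.Nonempty) :
    (∑ h ∈ D, g n h) ≠ 0 := by
  intro h0
  have hm := D.max'_mem hne
  have hval : (∑ h ∈ D, g n h) (D.max' hne) = 1 := by
    rw [Finset.sum_apply]
    rw [Finset.sum_eq_single (D.max' hne)]
    · exact g_diag (hD _ hm)
    · intro b hb hbne
      exact g_upper (lt_of_le_of_ne (D.le_max' b hb) hbne) (hD _ hm)
    · intro h; exact absurd hm h
  rw [h0] at hval
  simp at hval

lemma sum_g_inj {n : ℕ} {B C : Finset ℕ} (hB : ∀ h ∈ B, h < 2 ^ n) (hC : ∀ h ∈ C, h < 2 ^ n)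
    (heq : (∑ h ∈ B, g n h) = ∑ h ∈ C, g n h) : B = C := by
  by_contra hne
  set D := (B \ C) ∪ (C \ B) with hD
  have hDne : D.Nonempty := by
    by_contra h
    rw [Finset.not_nonempty_iff_eq_empty, hD, Finset.union_eq_empty,
      Finset.sdiff_eq_empty_iff_subset, Finset.sdiff_eq_empty_iff_subset] at h
    exact hne (Finset.Subset.antisymm h.1 h.2)
  have hDr : ∀ h ∈ D, h < 2 ^ n := by
    intro h hh
    rw [hD, Finset.mem_union, Finset.mem_sdiff, Finset.mem_sdiff] at hh
    rcases hh with h1 | h1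
    · exact hB _ h1.1
    · exact hC _ h1.1
  apply sum_g_ne_zero hDr hDne
  have hsB : (∑ h ∈ B \ C, g n h) + ∑ h ∈ B ∩ C, g n h = ∑ h ∈ B, g n h := by
    rw [← Finset.sdiff_inter_self_left B C]
    exact Finset.sum_sdiff Finset.inter_subset_left
  have hsC : (∑ h ∈ C \ B, g n h) + ∑ h ∈ B ∩ C, g n h = ∑ h ∈ C, g n h := by
    rw [← Finset.sdiff_inter_self_left C B, Finset.inter_comm B C]
    exact Finset.sum_sdiff Finset.inter_subset_left
  have h1 : (∑ h ∈ B \ C, g n h) = ∑ h ∈ C \ B, g n h := by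
    have h2 := hsB.trans (heq.trans hsC.symm)
    exact add_right_cancel h2
  have hdisj : Disjoint (B \ C) (C \ B) := by
    rw [Finset.disjoint_left]
    intro a ha hb
    rw [Finset.mem_sdiff] at ha hb
    exact hb.2 ha.1
  rw [hD, Finset.sum_union hdisj, h1]
  funext c
  simp only [Pi.add_apply, Pi.zero_apply]
  exact CharTwo.add_self_eq_zero _

end Aux3
section Aux4

lemma sum_high_low {n : ℕ} {Hh : Finset ℕ} (h2 : ∀ h ∈ Hh, 2 ^ n ≤ h ∧ h < 2 ^ (n + 1))
    {c : ℕ} (hc : c < 2 ^ n) :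
    ∑ h ∈ Hh, g (n + 1) h c = ∑ h' ∈ Hh.image (fun h => h - 2 ^ n), g n h' c := by
  rw [Finset.sum_image (by intro a ha b hb hab; dsimp only at hab; have := h2 a ha; have := h2 b hb; omega)]
  apply Finset.sum_congr rfl
  intro h hh
  obtain ⟨hl, hu⟩ := h2 h hh
  have he : 2 ^ n + (h - 2 ^ n) = h := by omega
  rw [← he, g_high_low (by rw [two_pow_succ] at hu; omega) hc]
  congr 1
  omega

lemma sum_high_high {n : ℕ} {Hh : Finset ℕ} (h2 : ∀ h ∈ Hh, 2 ^ n ≤ h ∧ h < 2 ^ (n + 1))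
    {c : ℕ} (hc : c < 2 ^ n) :
    ∑ h ∈ Hh, g (n + 1) h (2 ^ n + c) = ∑ h' ∈ Hh.image (fun h => h - 2 ^ n), g n h' c := by
  rw [Finset.sum_image (by intro a ha b hb hab; dsimp only at hab; have := h2 a ha; have := h2 b hb; omega)]
  apply Finset.sum_congr rfl
  intro h hh
  obtain ⟨hl, hu⟩ := h2 h hh
  have he : 2 ^ n + (h - 2 ^ n) = h := by omega
  rw [← he, g_high_high (by rw [two_pow_succ] at hu; omega) hc]
  congr 1
  omega

lemma coset_wt_ge {n : ℕ} : ∀ {i : ℕ}, i < 2 ^ n → ∀ {H : Finset ℕ},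
    H ⊆ Finset.Ico (i + 1) (2 ^ n) →
    wt n (g n i) ≤ wt n (g n i + ∑ h ∈ H, g n h) := by
  induction n with
  | zero =>
    intro i hi H hH
    interval_cases i
    have hHe : H = ∅ := Finset.subset_empty.mp (by simpa using hH)
    simp [hHe]
  | succ n ih =>
    intro i hi H hH
    have hmemH : ∀ h ∈ H, i + 1 ≤ h ∧ h < 2 ^ (n + 1) := fun h hh => Finset.mem_Ico.mp (hH hh)
    rcases lt_or_ge i (2 ^ n) with hilt | hige
    · -- i in lower half
      set Hlo := H.filter (fun h => h < 2 ^ n) with hHlo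
      set Hhi := H.filter (fun h => ¬ h < 2 ^ n) with hHhi
      set H1 := Hhi.image (fun h => h - 2 ^ n) with hH1
      have hhi2 : ∀ h ∈ Hhi, 2 ^ n ≤ h ∧ h < 2 ^ (n + 1) := by
        intro h hh
        rw [hHhi, Finset.mem_filter] at hh
        exact ⟨by omega, (hmemH h hh.1).2⟩
      set x : ℕ → ZMod 2 := g n i + ∑ h ∈ Hlo, g n h with hx
      set y : ℕ → ZMod 2 := ∑ h' ∈ H1, g n h' with hy
      have hLHS : wt (n + 1) (g (n + 1) i) = wt n (g n i) := by
        rw [wt_split]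
        have e1 : wt n (g (n + 1) i) = wt n (g n i) :=
          wt_congr (fun c hc => g_low hilt hc)
        have e2 : wt n (fun c => g (n + 1) i (2 ^ n + c)) = wt n (0 : ℕ → ZMod 2) :=
          wt_congr (fun c hc => by rw [g_low_high hilt hc]; rfl)
        rw [e1, e2, wt_zero, add_zero]
      have hRHS : wt (n + 1) (g (n + 1) i + ∑ h ∈ H, g (n + 1) h)
          = wt n (x + y) + wt n y := by
        rw [wt_split]
        congr 1
        · apply wt_congr
          intro c hc
          simp only [Pi.add_apply, Finset.sum_apply]
          rw [g_low hilt hc]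
          rw [← Finset.sum_filter_add_sum_filter_not H (fun h => h < 2 ^ n)
            (fun h => g (n + 1) h c)]
          have elo : ∑ h ∈ Hlo, g (n + 1) h c = ∑ h ∈ Hlo, g n h c := by
            apply Finset.sum_congr rfl
            intro h hh
            rw [hHlo, Finset.mem_filter] at hh
            exact g_low hh.2 hc
          have ehi : ∑ h ∈ Hhi, g (n + 1) h c = ∑ h' ∈ H1, g n h' c :=
            sum_high_low hhi2 hc
          rw [elo, ehi, hx, hy]
          simp only [Pi.add_apply, Finset.sum_apply]
          ring
        · apply wt_congr
          intro c hc
          simp only [Pi.add_apply, Finset.sum_apply]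
          rw [g_low_high hilt hc]
          rw [← Finset.sum_filter_add_sum_filter_not H (fun h => h < 2 ^ n)
            (fun h => g (n + 1) h (2 ^ n + c))]
          have elo : ∑ h ∈ Hlo, g (n + 1) h (2 ^ n + c) = 0 := by
            apply Finset.sum_eq_zero
            intro h hh
            rw [hHlo, Finset.mem_filter] at hh
            exact g_low_high hh.2 hc
          have ehi : ∑ h ∈ Hhi, g (n + 1) h (2 ^ n + c) = ∑ h' ∈ H1, g n h' c :=
            sum_high_high hhi2 hc
          rw [elo, ehi, hy]
          simp only [Finset.sum_apply]
          ring
      have hstep : wt n (g n i) ≤ wt n x := by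
        apply ih hilt
        intro h hh
        rw [hHlo, Finset.mem_filter] at hh
        rw [Finset.mem_Ico]
        exact ⟨(hmemH h hh.1).1, hh.2⟩
      calc wt (n + 1) (g (n + 1) i) = wt n (g n i) := hLHS
        _ ≤ wt n x := hstep
        _ ≤ wt n (x + y) + wt n y := wt_triangle n x y
        _ = wt (n + 1) (g (n + 1) i + ∑ h ∈ H, g (n + 1) h) := hRHS.symm
    · -- i in upper half
      obtain ⟨i', rfl⟩ : ∃ i', i = 2 ^ n + i' := ⟨i - 2 ^ n, by omega⟩
      have hi' : i' < 2 ^ n := by rw [two_pow_succ] at hi; omega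
      have hhi2 : ∀ h ∈ H, 2 ^ n ≤ h ∧ h < 2 ^ (n + 1) := by
        intro h hh
        obtain ⟨h1, h2⟩ := hmemH h hh
        exact ⟨by omega, h2⟩
      set H1 := H.image (fun h => h - 2 ^ n) with hH1
      set x : ℕ → ZMod 2 := g n i' + ∑ h' ∈ H1, g n h' with hx
      have hH1sub : H1 ⊆ Finset.Ico (i' + 1) (2 ^ n) := by
        intro h' hh'
        rw [hH1, Finset.mem_image] at hh'
        obtain ⟨h, hh, rfl⟩ := hh'
        obtain ⟨h1, h2⟩ := hmemH h hh
        rw [Finset.mem_Ico, two_pow_succ] at *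
        omega
      have hLHS : wt (n + 1) (g (n + 1) (2 ^ n + i')) = wt n (g n i') + wt n (g n i') := by
        rw [wt_split]
        congr 1
        · exact wt_congr (fun c hc => g_high_low hi' hc)
        · exact wt_congr (fun c hc => g_high_high hi' hc)
      have hRHS : wt (n + 1) (g (n + 1) (2 ^ n + i') + ∑ h ∈ H, g (n + 1) h)
          = wt n x + wt n x := by
        rw [wt_split]
        congr 1
        · apply wt_congr
          intro c hc
          simp only [Pi.add_apply, Finset.sum_apply]
          rw [g_high_low hi' hc, sum_high_low hhi2 hc, hx]
          simp only [Pi.add_apply, Finset.sum_apply]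
          rfl
        · apply wt_congr
          intro c hc
          simp only [Pi.add_apply, Finset.sum_apply]
          rw [g_high_high hi' hc, sum_high_high hhi2 hc, hx]
          simp only [Pi.add_apply, Finset.sum_apply]
          rfl
      rw [hLHS, hRHS]
      exact Nat.add_le_add (ih hi' hH1sub) (ih hi' hH1sub)

end Aux4
lemma coset_mem {n : ℕ} {I : Finset ℕ} {i : ℕ} {v : ℕ → ZMod 2} :
    v ∈ coset n I i ↔ ∃ H, H ⊆ I.filter (fun h => i < h) ∧ v = g n i + ∑ h ∈ H, g n h := by
  simp only [coset, Finset.mem_image, Finset.mem_powerset]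
  constructor
  · rintro ⟨H, hH, rfl⟩; exact ⟨H, hH, rfl⟩
  · rintro ⟨H, hH, rfl⟩; exact ⟨H, hH, rfl⟩

lemma coset_elt_eq_sum_insert {n : ℕ} {I : Finset ℕ} {i : ℕ} {H : Finset ℕ}
    (hH : H ⊆ I.filter (fun h => i < h)) :
    g n i + ∑ h ∈ H, g n h = ∑ h ∈ insert i H, g n h := by
  have hiH : i ∉ H := by
    intro hmem
    have := Finset.mem_filter.mp (hH hmem)
    omega
  rw [Finset.sum_insert hiH]

theorem coset_partition' (n : ℕ) (hn : 1 ≤ n) (I : Finset ℕ) (hI : I.Nonempty)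
    (hIr : ∀ i ∈ I, i < 2 ^ n)
    (wmin : ℕ) (hw : wmin = I.inf' hI fun i => wt n (g n i)) :
    (∀ i ∈ I, ∀ j ∈ I, i ≠ j → Disjoint (coset n I i) (coset n I j)) ∧
    I.biUnion (coset n I) = (codewords n I).erase 0 ∧
    A n I wmin = ∑ i ∈ I.filter fun i => wt n (g n i) = wmin, Ai n I i wmin ∧
    ∀ i ∈ I, wmin < wt n (g n i) → Ai n I i wmin = 0 := by
  -- basic facts
  have hwle : ∀ i ∈ I, wmin ≤ wt n (g n i) := by
    intro i hi
    rw [hw]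
    exact Finset.inf'_le _ hi
  obtain ⟨i0, hi0I, hwi0⟩ := Finset.exists_mem_eq_inf' hI (fun i => wt n (g n i))
  have hw1 : 1 ≤ wmin := by
    rw [hw, hwi0]
    rw [Nat.one_le_iff_ne_zero]
    intro h0
    have : i0 ∈ (Finset.range (2 ^ n)).filter (fun c => g n i0 c ≠ 0) := by
      rw [Finset.mem_filter, Finset.mem_range]
      refine ⟨hIr i0 hi0I, ?_⟩
      rw [g_diag (hIr i0 hi0I)]
      norm_num
    have hcard : 0 < wt n (g n i0) := Finset.card_pos.mpr ⟨i0, this⟩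
    omega
  have hins_range : ∀ i ∈ I, ∀ H ⊆ I.filter (fun h => i < h),
      ∀ h ∈ insert i H, h < 2 ^ n := by
    intro i hi H hH h hh
    rcases Finset.mem_insert.mp hh with rfl | hh
    · exact hIr _ hi
    · exact hIr _ (Finset.mem_filter.mp (hH hh)).1
  -- Part 1 : disjointness
  have part1 : ∀ i ∈ I, ∀ j ∈ I, i ≠ j → Disjoint (coset n I i) (coset n I j) := by
    intro i hi j hj hij
    rw [Finset.disjoint_left]
    intro v hvi hvj
    obtain ⟨H, hH, rfl⟩ := coset_mem.mp hvi
    obtain ⟨H', hH', heq⟩ := coset_mem.mp hvj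
    rw [coset_elt_eq_sum_insert hH, coset_elt_eq_sum_insert hH'] at heq
    have hsets : insert i H = insert j H' :=
      sum_g_inj (hins_range i hi H hH) (hins_range j hj H' hH') heq
    have hjmem : j ∈ insert i H := by rw [hsets]; exact Finset.mem_insert_self j H'
    have himem : i ∈ insert j H' := by rw [← hsets]; exact Finset.mem_insert_self i H
    rcases Finset.mem_insert.mp hjmem with rfl | hjH
    · exact hij rfl
    rcases Finset.mem_insert.mp himem with rfl | hiH'
    · exact hij rfl
    have h1 : i < j := (Finset.mem_filter.mp (hH hjH)).2
    have h2 : j < i := (Finset.mem_filter.mp (hH' hiH')).2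
    omega
  -- Part 2 : union
  have part2 : I.biUnion (coset n I) = (codewords n I).erase 0 := by
    ext v
    rw [Finset.mem_biUnion, Finset.mem_erase]
    constructor
    · rintro ⟨i, hi, hv⟩
      obtain ⟨H, hH, rfl⟩ := coset_mem.mp hv
      rw [coset_elt_eq_sum_insert hH]
      constructor
      · exact sum_g_ne_zero (hins_range i hi H hH) (Finset.insert_nonempty i H)
      · rw [codewords, Finset.mem_image]
        refine ⟨insert i H, Finset.mem_powerset.mpr ?_, rfl⟩
        intro h hh
        rcases Finset.mem_insert.mp hh with rfl | hh
        · exact hi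
        · exact (Finset.mem_filter.mp (hH hh)).1
    · rintro ⟨hv0, hvc⟩
      rw [codewords, Finset.mem_image] at hvc
      obtain ⟨H, hHp, rfl⟩ := hvc
      rw [Finset.mem_powerset] at hHp
      have hHne : H.Nonempty := by
        rcases Finset.eq_empty_or_nonempty H with rfl | h
        · simp at hv0
        · exact h
      set i := H.min' hHne with hidef
      have hiH : i ∈ H := H.min'_mem hHne
      refine ⟨i, hHp hiH, ?_⟩
      rw [coset_mem]
      refine ⟨H.erase i, ?_, ?_⟩
      · intro h hh
        have hh' := Finset.mem_erase.mp hh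
        rw [Finset.mem_filter]
        exact ⟨hHp hh'.2, lt_of_le_of_ne (H.min'_le h hh'.2) (Ne.symm hh'.1)⟩
      · rw [Finset.add_sum_erase _ _ hiH]
  -- Part 4 : coset weight bound
  have part4 : ∀ i ∈ I, wmin < wt n (g n i) → Ai n I i wmin = 0 := by
    intro i hi hlt
    rw [Ai, Finset.card_eq_zero, Finset.filter_eq_empty_iff]
    intro v hv
    obtain ⟨H, hH, rfl⟩ := coset_mem.mp hv
    have hsub : H ⊆ Finset.Ico (i + 1) (2 ^ n) := by
      intro h hh
      have h' := Finset.mem_filter.mp (hH hh)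
      rw [Finset.mem_Ico]
      exact ⟨h'.2, hIr _ h'.1⟩
    have hge := coset_wt_ge (hIr i hi) hsub
    omega
  -- Part 3 : sum formula
  have part3 : A n I wmin = ∑ i ∈ I.filter fun i => wt n (g n i) = wmin, Ai n I i wmin := by
    have step1 : (codewords n I).filter (fun v => wt n v = wmin)
        = ((codewords n I).erase 0).filter (fun v => wt n v = wmin) := by
      ext v
      simp only [Finset.mem_filter, Finset.mem_erase]
      constructor
      · rintro ⟨h1, h2⟩
        refine ⟨⟨?_, h1⟩, h2⟩
        rintro rfl
        rw [wt_zero] at h2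
        omega
      · rintro ⟨⟨_, h1⟩, h2⟩
        exact ⟨h1, h2⟩
    have step2 : ((I.biUnion (coset n I)).filter (fun v => wt n v = wmin))
        = I.biUnion (fun i => (coset n I i).filter (fun v => wt n v = wmin)) := by
      ext v
      simp only [Finset.mem_filter, Finset.mem_biUnion]
      tauto
    have step3 : A n I wmin = ∑ i ∈ I, Ai n I i wmin := by
      rw [A, step1, ← part2, step2, Finset.card_biUnion (fun i hi j hj hij =>
        (part1 i hi j hj hij).mono (Finset.filter_subset _ _) (Finset.filter_subset _ _))]
      rfl
    rw [step3]
    apply (Finset.sum_subset (Finset.filter_subset _ _) _).symm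
    intro x hx hnx
    rw [Finset.mem_filter] at hnx
    have : wt n (g n x) ≠ wmin := fun h => hnx ⟨hx, h⟩
    have hlt : wmin < wt n (g n x) := lt_of_le_of_ne (hwle x hx) (Ne.symm this)
    exact part4 x hx hlt
  exact ⟨part1, part2, part3, part4⟩
/-- the cosets C_i(I), i ∈ I, partition C(I) \ {0}, and
A_{w_min}(I) = Σ_{i ∈ I, w(g_i)=w_min} A_{i,w_min}(I); in particular A_{i,w_min}(I) = 0
whenever w(g_i) > w_min. -/
theorem coset_partition (n : ℕ) (hn : 1 ≤ n) (I : Finset ℕ) (hI : I.Nonempty)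
    (hIr : ∀ i ∈ I, i < 2 ^ n)
    (wmin : ℕ) (hw : wmin = I.inf' hI fun i => wt n (g n i)) :
    (∀ i ∈ I, ∀ j ∈ I, i ≠ j → Disjoint (coset n I i) (coset n I j)) ∧
    I.biUnion (coset n I) = (codewords n I).erase 0 ∧
    A n I wmin = ∑ i ∈ I.filter fun i => wt n (g n i) = wmin, Ai n I i wmin ∧
    ∀ i ∈ I, wmin < wt n (g n i) → Ai n I i wmin = 0 :=
  coset_partition' n hn I hI hIr wmin hw
end
end

section
/- For every i ∈ [0, N−1], the set K_i equals {j ∈ [i+1, N−1] : |S_j \ S_i| = 1 and |S_j| ∈ {|S_i|, |S_i|+1}}. -/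
noncomputable section
open scoped Classical
open Finset

lemma mem_S {n i a : ℕ} : a ∈ S n i ↔ a < n ∧ i.testBit a := by
  simp [S]

lemma S_subset_range (n i : ℕ) : S n i ⊆ Finset.range n := Finset.filter_subset _ _

lemma S_mod (n i : ℕ) : S n (i % 2 ^ n) = S n i := by
  ext a
  simp only [mem_S, Nat.testBit_mod_two_pow]
  constructor
  · rintro ⟨h1, h2⟩; simp [h1] at h2; exact ⟨h1, h2⟩
  · rintro ⟨h1, h2⟩; exact ⟨h1, by simp [h1, h2]⟩

lemma subset_succ_iff {n i c : ℕ} :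
    S (n+1) c ⊆ S (n+1) i ↔ (S n c ⊆ S n i ∧ (c.testBit n → i.testBit n)) := by
  constructor
  · intro h
    constructor
    · intro a ha
      rw [mem_S] at ha
      have : a ∈ S (n+1) i := h (mem_S.2 ⟨by omega, ha.2⟩)
      rw [mem_S] at this
      exact mem_S.2 ⟨ha.1, this.2⟩
    · intro hc
      have : n ∈ S (n+1) i := h (mem_S.2 ⟨by omega, hc⟩)
      exact (mem_S.1 this).2
  · rintro ⟨h1, h2⟩ a ha
    rw [mem_S] at ha ⊢
    rcases Nat.lt_succ_iff_lt_or_eq.1 ha.1 with h | h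
    · exact ⟨ha.1, (mem_S.1 (h1 (mem_S.2 ⟨h, ha.2⟩))).2⟩
    · subst h; exact ⟨ha.1, h2 ha.2⟩

lemma testBit_high {n x : ℕ} (hx : x < 2 ^ (n+1)) : x.testBit n ↔ x / 2 ^ n = 1 := by
  have hd : x / 2 ^ n < 2 := by
    apply Nat.div_lt_of_lt_mul; rw [pow_succ] at hx; omega
  rw [Nat.testBit_eq_decide_div_mod_eq]
  interval_cases h : x / 2 ^ n <;> simp

lemma G_eq : ∀ (n i c : ℕ), i < 2 ^ n → c < 2 ^ n →
    G n i c = if S n c ⊆ S n i then 1 else 0 := by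
  intro n
  induction n with
  | zero =>
    intro i c hi hc
    interval_cases i
    interval_cases c
    simp [G, S]
  | succ n ih =>
    intro i c hi hc
    have h2 : (0:ℕ) < 2 ^ n := Nat.pow_pos (by norm_num)
    have hil : i % 2 ^ n < 2 ^ n := Nat.mod_lt _ h2
    have hcl : c % 2 ^ n < 2 ^ n := Nat.mod_lt _ h2
    have hih : i / 2 ^ n < 2 := by
      apply Nat.div_lt_of_lt_mul; rw [pow_succ] at hi; omega
    have hch : c / 2 ^ n < 2 := by
      apply Nat.div_lt_of_lt_mul; rw [pow_succ] at hc; omega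
    have hG : G (n+1) i c = G2 (i / 2 ^ n) (c / 2 ^ n) * G n (i % 2 ^ n) (c % 2 ^ n) := rfl
    rw [hG, ih _ _ hil hcl, S_mod, S_mod]
    have hti := testBit_high hi
    have htc := testBit_high hc
    by_cases hsub : S n c ⊆ S n i
    · interval_cases hiv : i / 2 ^ n <;> interval_cases hcv : c / 2 ^ n <;>
        simp_all [G2, subset_succ_iff]
    · interval_cases hiv : i / 2 ^ n <;> interval_cases hcv : c / 2 ^ n <;>
        simp_all [G2, subset_succ_iff]

lemma S_injOn (n : ℕ) : Set.InjOn (S n) (Finset.range (2 ^ n)) := by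
  intro x hx y hy hxy
  simp only [Finset.coe_range, Set.mem_Iio] at hx hy
  apply Nat.eq_of_testBit_eq
  intro a
  by_cases ha : a < n
  · have := Finset.ext_iff.1 hxy a
    simp only [mem_S, ha, true_and] at this
    by_cases h : x.testBit a
    · simp [h, this.1 h]
    · have h2 : ¬ y.testBit a := fun hy2 => h (this.2 hy2)
      simp [h, h2]
  · rw [Nat.testBit_lt_two_pow, Nat.testBit_lt_two_pow]
    · calc y < 2 ^ n := hy
        _ ≤ 2 ^ a := Nat.pow_le_pow_right (by norm_num) (by omega)
    · calc x < 2 ^ n := hx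
        _ ≤ 2 ^ a := Nat.pow_le_pow_right (by norm_num) (by omega)

lemma image_S (n : ℕ) :
    (Finset.range (2 ^ n)).image (S n) = (Finset.range n).powerset := by
  apply Finset.eq_of_subset_of_card_le
  · intro U hU
    simp only [Finset.mem_image] at hU
    obtain ⟨c, _, rfl⟩ := hU
    exact Finset.mem_powerset.2 (S_subset_range n c)
  · rw [Finset.card_powerset, Finset.card_range,
      Finset.card_image_of_injOn (S_injOn n), Finset.card_range]

lemma count_S (n : ℕ) (p : Finset ℕ → Prop) [DecidablePred p]
    [DecidablePred fun c => p (S n c)] :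
    ((Finset.range (2 ^ n)).filter fun c => p (S n c)).card
      = ((Finset.range n).powerset.filter p).card := by
  apply Finset.card_bij (fun c _ => S n c)
  · intro c hc
    rw [Finset.mem_filter] at hc ⊢
    exact ⟨Finset.mem_powerset.2 (S_subset_range n c), hc.2⟩
  · intro c1 h1 c2 h2 h
    exact S_injOn n (by simpa using Finset.mem_of_mem_filter _ h1)
      (by simpa using Finset.mem_of_mem_filter _ h2) h
  · intro U hU
    rw [Finset.mem_filter] at hU
    have := Finset.ext_iff.1 (image_S n) U
    rw [Finset.mem_image] at this
    obtain ⟨c, hc, rfl⟩ := this.2 hU.1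
    exact ⟨c, Finset.mem_filter.2 ⟨hc, hU.2⟩, rfl⟩

lemma powerset_filter_subset (n : ℕ) (V : Finset ℕ) (hV : V ⊆ Finset.range n) :
    (Finset.range n).powerset.filter (fun U => U ⊆ V) = V.powerset := by
  ext U
  simp only [Finset.mem_filter, Finset.mem_powerset]
  exact ⟨fun h => h.2, fun h => ⟨h.trans hV, h⟩⟩

lemma wt_g {n i : ℕ} (hi : i < 2 ^ n) : wt n (g n i) = 2 ^ (S n i).card := by
  have h1 : ((Finset.range (2 ^ n)).filter fun c => g n i c ≠ 0)
      = (Finset.range (2 ^ n)).filter fun c => S n c ⊆ S n i := by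
    apply Finset.filter_congr
    intro c hc
    rw [g, G_eq n i c hi (Finset.mem_range.1 hc)]
    split <;> simp_all
  have h2 : ((Finset.range (2 ^ n)).filter fun c => S n c ⊆ S n i).card
      = ((Finset.range n).powerset.filter fun U => U ⊆ S n i).card :=
    count_S n (fun U => U ⊆ S n i)
  rw [wt, h1, h2, powerset_filter_subset n _ (S_subset_range n i), Finset.card_powerset]

lemma card_sub (n : ℕ) (V W : Finset ℕ) (hV : V ⊆ Finset.range n) :
    ((Finset.range n).powerset.filter fun U => U ⊆ V ∧ ¬ U ⊆ W).card
      = 2 ^ V.card - 2 ^ (V ∩ W).card := by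
  have h3 := Finset.card_filter_add_card_filter_not
    (s := (Finset.range n).powerset.filter fun U => U ⊆ V) (p := fun U => U ⊆ W)
  rw [Finset.filter_filter, Finset.filter_filter] at h3
  have h4 : (Finset.range n).powerset.filter (fun U => U ⊆ V ∧ U ⊆ W)
      = (V ∩ W).powerset := by
    rw [← powerset_filter_subset n (V ∩ W) ((Finset.inter_subset_left).trans hV)]
    apply Finset.filter_congr; intro U _; simp [Finset.subset_inter_iff]
  have h5 := powerset_filter_subset n V hV
  rw [h4, Finset.card_powerset] at h3
  have h6 : ((Finset.range n).powerset.filter fun U => U ⊆ V).card = 2 ^ V.card := by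
    rw [h5, Finset.card_powerset]
  omega

lemma wt_add {n i j : ℕ} (hi : i < 2 ^ n) (hj : j < 2 ^ n) :
    wt n (g n i + g n j)
      = (2 ^ (S n i).card - 2 ^ (S n i ∩ S n j).card)
        + (2 ^ (S n j).card - 2 ^ (S n i ∩ S n j).card) := by
  have h1 : ((Finset.range (2 ^ n)).filter fun c => (g n i + g n j) c ≠ 0)
      = (Finset.range (2 ^ n)).filter fun c =>
          (S n c ⊆ S n i ∧ ¬ S n c ⊆ S n j) ∨ (S n c ⊆ S n j ∧ ¬ S n c ⊆ S n i) := by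
    apply Finset.filter_congr
    intro c hc
    have hc' := Finset.mem_range.1 hc
    show (g n i c + g n j c ≠ 0) ↔ _
    rw [g, g, G_eq n i c hi hc', G_eq n j c hj hc']
    by_cases h1 : S n c ⊆ S n i <;> by_cases h2 : S n c ⊆ S n j <;> simp [h1, h2] <;> decide
  have h2 : ((Finset.range (2 ^ n)).filter fun c =>
        (S n c ⊆ S n i ∧ ¬ S n c ⊆ S n j) ∨ (S n c ⊆ S n j ∧ ¬ S n c ⊆ S n i)).card
      = ((Finset.range n).powerset.filter fun U =>
        (U ⊆ S n i ∧ ¬ U ⊆ S n j) ∨ (U ⊆ S n j ∧ ¬ U ⊆ S n i)).card :=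
    count_S n (fun U => (U ⊆ S n i ∧ ¬ U ⊆ S n j) ∨ (U ⊆ S n j ∧ ¬ U ⊆ S n i))
  rw [wt, h1, h2, Finset.filter_or, Finset.card_union_of_disjoint (by
    rw [Finset.disjoint_filter]; tauto)]
  rw [card_sub n _ _ (S_subset_range n i), card_sub n _ _ (S_subset_range n j),
    Finset.inter_comm (S n j)]

lemma arith (a b m : ℕ) (hma : m ≤ a) (hmb : m ≤ b) :
    ((2 ^ a - 2 ^ m) + (2 ^ b - 2 ^ m) ≤ 2 ^ b ∧ (2 ^ a - 2 ^ m) + (2 ^ b - 2 ^ m) = 2 ^ a)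
      ↔ (b - m = 1 ∧ (b = a ∨ b = a + 1)) := by
  have hA : 2 ^ m ≤ 2 ^ a := Nat.pow_le_pow_right (by norm_num) hma
  have hB : 2 ^ m ≤ 2 ^ b := Nat.pow_le_pow_right (by norm_num) hmb
  constructor
  · rintro ⟨h1, h2⟩
    have hb2 : 2 ^ b = 2 ^ (m + 1) := by rw [pow_succ]; omega
    have hb : b = m + 1 := Nat.pow_right_injective (le_refl 2) hb2
    have ha2 : 2 ^ a ≤ 2 ^ (m + 1) := by rw [pow_succ]; omega
    have ha : a ≤ m + 1 := (Nat.pow_le_pow_iff_right (by norm_num)).1 ha2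
    omega
  · rintro ⟨h1, h2⟩
    have hb : b = m + 1 := by omega
    have ha : a ≤ m + 1 := by omega
    have ha2 : 2 ^ a ≤ 2 ^ (m + 1) := Nat.pow_le_pow_right (by norm_num) ha
    subst hb
    rw [pow_succ] at *
    omega

/-- K_i = {j ∈ [i+1,N−1] : |S_j \ S_i| = 1 and |S_j| ∈ {|S_i|, |S_i|+1}}. -/
theorem K_characterization (n : ℕ) (hn : 1 ≤ n) (i : ℕ) (hi : i < 2 ^ n) :
    K n i = (Finset.Ico (i + 1) (2 ^ n)).filter fun j =>
      (S n j \ S n i).card = 1 ∧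
        ((S n j).card = (S n i).card ∨ (S n j).card = (S n i).card + 1) := by
  rw [K]
  apply Finset.filter_congr
  intro j hj
  have hj' : j < 2 ^ n := (Finset.mem_Ico.1 hj).2
  rw [wt_add hi hj', wt_g hi, wt_g hj']
  have hma : (S n i ∩ S n j).card ≤ (S n i).card :=
    Finset.card_le_card Finset.inter_subset_left
  have hmb : (S n i ∩ S n j).card ≤ (S n j).card :=
    Finset.card_le_card Finset.inter_subset_right
  have hsd : (S n j \ S n i).card = (S n j).card - (S n i ∩ S n j).card := by
    have := Finset.card_inter_add_card_sdiff (S n j) (S n i)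
    rw [Finset.inter_comm] at this
    omega
  rw [arith _ _ _ hma hmb, hsd]
end
end
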